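/- Let f ∈ ℰ'(ℝ^d) be a compactly supported distribution and φ ∈ 𝒮(ℝ^d). Then there exist N₀ ≥ 0 and, for every N ≥ 0, constants C_N such that the short-time Fourier transform satisfies |V_φ f(x,ξ)| ≤ C_N ⟨x⟩^{-N} ⟨ξ⟩^{N₀} for all (x,ξ) ∈ ℝ^{2d}. -/

import Mathlib

open scoped RealInnerProductSpace ContDiff
open Real

/-- The Japanese bracket. -/
noncomputable def jb {d : ℕ} (x : EuclideanSpace ℝ (Fin d)) : ℝ :=
  (1 + ‖x‖ ^ 2) ^ ((1 : ℝ) / 2)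


section jbl
variable {d : ℕ} (x : EuclideanSpace ℝ (Fin d))

theorem jb_eq_sqrt : jb x = Real.sqrt (1 + ‖x‖ ^ 2) := by
  rw [jb, Real.sqrt_eq_rpow]

theorem one_le_jb : 1 ≤ jb x := by
  rw [jb_eq_sqrt]
  have := Real.sqrt_le_sqrt (show (1:ℝ) ≤ 1 + ‖x‖ ^ 2 by nlinarith [sq_nonneg ‖x‖])
  simpa using this

theorem jb_nonneg : 0 ≤ jb x := le_trans zero_le_one (one_le_jb x)

theorem norm_le_jb : ‖x‖ ≤ jb x := by
  rw [jb_eq_sqrt]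
  have h : Real.sqrt (‖x‖ ^ 2) ≤ Real.sqrt (1 + ‖x‖ ^ 2) := Real.sqrt_le_sqrt (by linarith)
  rwa [Real.sqrt_sq (norm_nonneg x)] at h

theorem jb_le_one_add : jb x ≤ 1 + ‖x‖ := by
  rw [jb_eq_sqrt]
  have h : Real.sqrt (1 + ‖x‖ ^ 2) ≤ Real.sqrt ((1 + ‖x‖) ^ 2) :=
    Real.sqrt_le_sqrt (by nlinarith [norm_nonneg x])
  rwa [Real.sqrt_sq (by positivity)] at h
end jbl

section Aux

variable {E F : Type*} [NormedAddCommGroup E] [NormedSpace ℝ E]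
  [NormedAddCommGroup F] [NormedSpace ℝ F]

theorem iteratedFDeriv_comp_sub_aux (f : E → F) (hf : ContDiff ℝ ∞ f) (x : E) (n : ℕ) :
    iteratedFDeriv ℝ n (fun y => f (y - x)) = fun y => iteratedFDeriv ℝ n f (y - x) := by
  induction n with
  | zero => ext y m; simp
  | succ n IH =>
    funext y
    ext m
    rw [iteratedFDeriv_succ_apply_left, iteratedFDeriv_succ_apply_left, IH]
    have hdf : DifferentiableAt ℝ (iteratedFDeriv ℝ n f) (y - x) :=
      (hf.differentiable_iteratedFDeriv
        (by exact_mod_cast ENat.coe_lt_top n)).differentiableAt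
    have h1 : HasFDerivAt (fun z => iteratedFDeriv ℝ n f (z - x))
        (fderiv ℝ (iteratedFDeriv ℝ n f) (y - x)) y := by
      have := hdf.hasFDerivAt.comp y ((hasFDerivAt_id y).sub_const x)
      simpa [Function.comp_def] using this
    rw [h1.fderiv]

theorem iteratedFDeriv_eq_zero_of_eventually_zero {f : E → F} {y : E}
    (h : f =ᶠ[nhds y] 0) (n : ℕ) : iteratedFDeriv ℝ n f y = 0 := by
  rw [← iteratedFDerivWithin_univ]
  have h' : f =ᶠ[nhdsWithin y Set.univ] (fun _ => (0 : F)) :=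
    h.filter_mono nhdsWithin_le_nhds
  rw [h'.iteratedFDerivWithin_eq h.self_of_nhds n, iteratedFDerivWithin_univ,
    iteratedFDeriv_zero_fun]
  rfl

theorem sub_const_hasTemperateGrowth (x : E) :
    Function.HasTemperateGrowth (fun y : E => y - x) := by
  have hdiff : Differentiable ℝ (fun y : E => y - x) := (differentiable_id).sub_const x
  have hfd : (fderiv ℝ (fun y : E => y - x)) = fun _ => ContinuousLinearMap.id ℝ E := by
    funext y
    have : HasFDerivAt (fun y : E => y - x) (ContinuousLinearMap.id ℝ E) y := by
      simpa using (hasFDerivAt_id y).sub_const x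
    exact this.fderiv
  refine Function.HasTemperateGrowth.of_fderiv ?_ hdiff (k := 1) (C := 1 + ‖x‖) (fun y => ?_)
  · rw [hfd]; exact Function.HasTemperateGrowth.const _
  · have : ‖y - x‖ ≤ ‖y‖ + ‖x‖ := norm_sub_le y x
    have h1 : (0:ℝ) ≤ ‖x‖ := norm_nonneg x
    have h2 : (0:ℝ) ≤ ‖y‖ := norm_nonneg y
    nlinarith

theorem hasTemperateGrowth_of_hasCompactSupport {f : E → ℝ} (hf : ContDiff ℝ ∞ f)
    (h : HasCompactSupport f) : Function.HasTemperateGrowth f := by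
  refine ⟨hf, fun n => ?_⟩
  obtain ⟨C, hC⟩ := (h.iteratedFDeriv n).exists_bound_of_continuous
    (hf.continuous_iteratedFDeriv (mod_cast le_top))
  exact ⟨0, C, fun y => by simpa using hC y⟩

end Aux

section Char

theorem expAux_contDiff : ContDiff ℝ ∞ (fun t : ℝ => Complex.exp (-Complex.I * t)) := by
  have : (fun t : ℝ => Complex.exp (-Complex.I * t)) =
      Complex.exp ∘ (fun t : ℝ => -Complex.I * t) := rfl
  rw [this]
  exact ((Complex.contDiff_exp (𝕜 := ℂ)).restrict_scalars ℝ).comp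
    ((contDiff_const (c := -Complex.I)).mul Complex.ofRealCLM.contDiff)

theorem expAux_iteratedDeriv (n : ℕ) :
    iteratedDeriv n (fun t : ℝ => Complex.exp (-Complex.I * t)) =
      fun t : ℝ => (-Complex.I) ^ n * Complex.exp (-Complex.I * t) := by
  induction n with
  | zero => simp
  | succ n IH =>
    rw [iteratedDeriv_succ, IH]
    funext t
    have h : HasDerivAt (fun t : ℝ => Complex.exp (-Complex.I * t))
        (-Complex.I * Complex.exp (-Complex.I * t)) t := by
      have h1 : HasDerivAt (fun t : ℝ => -Complex.I * (t : ℂ)) (-Complex.I) t := by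
        simpa using ((hasDerivAt_id (t : ℂ)).const_mul (-Complex.I)).comp_ofReal
      simpa [mul_comm, Function.comp_def] using (Complex.hasDerivAt_exp (-Complex.I * t)).comp t h1
    have : HasDerivAt (fun t : ℝ => (-Complex.I) ^ n * Complex.exp (-Complex.I * t))
        ((-Complex.I) ^ n * (-Complex.I * Complex.exp (-Complex.I * t))) t := h.const_mul _
    rw [this.deriv]; ring

theorem expAux_norm (n : ℕ) (t : ℝ) :
    ‖iteratedFDeriv ℝ n (fun t : ℝ => Complex.exp (-Complex.I * t)) t‖ = 1 := by
  rw [norm_iteratedFDeriv_eq_norm_iteratedDeriv, expAux_iteratedDeriv]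
  simp [Complex.norm_exp]

variable {E : Type*} [NormedAddCommGroup E] [InnerProductSpace ℝ E]

/-- The character function. -/
noncomputable def char (ξ : E) : E → ℂ := fun y => Complex.exp (-Complex.I * (⟪y, ξ⟫ : ℝ))

theorem char_eq (ξ : E) :
    char ξ = (fun t : ℝ => Complex.exp (-Complex.I * t)) ∘ (innerSL ℝ ξ) := by
  funext y
  simp [char, real_inner_comm]

theorem char_contDiff (ξ : E) : ContDiff ℝ ∞ (char ξ) := by
  rw [char_eq]; exact expAux_contDiff.comp (innerSL ℝ ξ).contDiff

theorem char_norm_iteratedFDeriv_le (ξ : E) (n : ℕ) (y : E) :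
    ‖iteratedFDeriv ℝ n (char ξ) y‖ ≤ ‖ξ‖ ^ n := by
  rw [char_eq, (innerSL ℝ ξ).iteratedFDeriv_comp_right expAux_contDiff y (mod_cast le_top)]
  apply (ContinuousMultilinearMap.norm_compContinuousLinearMap_le _ _).trans
  rw [expAux_norm]
  simp [innerSL_apply_norm]

theorem char_hasTemperateGrowth (ξ : E) : Function.HasTemperateGrowth (char ξ) :=
  ⟨char_contDiff ξ, fun n => ⟨0, ‖ξ‖ ^ n, fun y => by
    simpa using char_norm_iteratedFDeriv_le ξ n y⟩⟩

end Char

section Conj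

variable {E : Type*} [NormedAddCommGroup E] [NormedSpace ℝ E]

/-- Complex conjugate of a Schwartz function. -/
noncomputable def conjSchwartz (φ : SchwartzMap E ℂ) : SchwartzMap E ℂ where
  toFun := fun y => (starRingEnd ℂ) (φ y)
  smooth' := Complex.conjCLE.contDiff.comp φ.smooth'
  decay' := by
    intro k n
    obtain ⟨C, hC⟩ := φ.decay' k n
    refine ⟨C, fun y => ?_⟩
    have heq : ‖iteratedFDeriv ℝ n (fun y => (starRingEnd ℂ) (φ y)) y‖ =
        ‖iteratedFDeriv ℝ n (⇑φ) y‖ := by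
      have := Complex.conjLIE.norm_iteratedFDeriv_comp_left (⇑φ) y n
      simpa [Function.comp_def, Complex.conjLIE_apply] using this
    rw [heq]; exact hC y

@[simp] theorem conjSchwartz_apply (φ : SchwartzMap E ℂ) (y : E) :
    conjSchwartz φ y = (starRingEnd ℂ) (φ y) := rfl

end Conj

set_option maxHeartbeats 3000000 in
/-- if `f ∈ ℰ'(ℝ^d)` is a compactly supported (tempered) distribution and
`φ ∈ 𝒮(ℝ^d)`, then the short-time Fourier transform
`V_φ f(x,ξ) = f( y ↦ (2π)^{-d/2} e^{-i⟨y,ξ⟩} conj(φ(y−x)) )` satisfies, for some `N₀`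
and all `N ≥ 0`, the bound `|V_φ f(x,ξ)| ≤ C_N ⟨x⟩^{-N} ⟨ξ⟩^{N₀}`. -/
theorem stmt_15 {d : ℕ}
    (f : SchwartzMap (EuclideanSpace ℝ (Fin d)) ℂ →L[ℂ] ℂ)
    (K : Set (EuclideanSpace ℝ (Fin d))) (hK : IsCompact K)
    -- f has compact support contained in K:
    (hsupp : ∀ ψ : SchwartzMap (EuclideanSpace ℝ (Fin d)) ℂ,
      Disjoint (tsupport ⇑ψ) K → f ψ = 0)
    (φ : SchwartzMap (EuclideanSpace ℝ (Fin d)) ℂ)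
    (V : EuclideanSpace ℝ (Fin d) → EuclideanSpace ℝ (Fin d) → ℂ)
    -- V is the short-time Fourier transform of f with window φ:
    (hV : ∀ (x ξ : EuclideanSpace ℝ (Fin d))
      (ψ : SchwartzMap (EuclideanSpace ℝ (Fin d)) ℂ),
      (∀ y, ψ y = ((2 * π) ^ (-(d : ℝ) / 2) : ℝ) *
        Complex.exp (-Complex.I * (⟪y, ξ⟫ : ℝ)) * (starRingEnd ℂ) (φ (y - x))) →
      V x ξ = f ψ) :
    ∃ N₀ : ℝ, ∀ N : ℝ, 0 ≤ N → ∃ C : ℝ, 0 < C ∧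
      ∀ x ξ : EuclideanSpace ℝ (Fin d),
        ‖V x ξ‖ ≤ C * jb x ^ (-N) * jb ξ ^ N₀ := by
  classical
  -- seminorm bound for the continuous functional f
  obtain ⟨s, C₀, hC₀ne, hbound⟩ :=
    Seminorm.bound_of_continuous (schwartz_withSeminorms ℂ (EuclideanSpace ℝ (Fin d)) ℂ)
      ((normSeminorm ℂ ℂ).comp f.toLinearMap)
      (show Continuous fun ψ => ‖f ψ‖ from f.continuous.norm)
  set m : ℕ × ℕ := s.sup id with hm
  have hssub : s ⊆ Finset.Iic m := fun a ha => Finset.mem_Iic.2 (Finset.le_sup (f := id) ha)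
  set k₁ : ℕ := m.1
  set n₂ : ℕ := m.2
  have hfb : ∀ ψ : SchwartzMap (EuclideanSpace ℝ (Fin d)) ℂ, ‖f ψ‖ ≤
      C₀ * ((Finset.Iic m).sup (schwartzSeminormFamily ℂ (EuclideanSpace ℝ (Fin d)) ℂ)) ψ := by
    intro ψ
    have h1 := hbound ψ
    have h2 : ((s.sup (schwartzSeminormFamily ℂ (EuclideanSpace ℝ (Fin d)) ℂ))) ψ ≤
        ((Finset.Iic m).sup (schwartzSeminormFamily ℂ (EuclideanSpace ℝ (Fin d)) ℂ)) ψ :=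
      Seminorm.le_def.mp (Finset.sup_mono hssub) ψ
    calc ‖f ψ‖ ≤ C₀ * ((s.sup (schwartzSeminormFamily ℂ (EuclideanSpace ℝ (Fin d)) ℂ))) ψ := by
          simpa [NNReal.smul_def] using h1
      _ ≤ _ := by
          have : (0:ℝ) ≤ (C₀ : ℝ) := C₀.coe_nonneg
          exact mul_le_mul_of_nonneg_left h2 this
  -- radius
  obtain ⟨r₀, hr₀K⟩ := hK.isBounded.subset_closedBall 0
  set r : ℝ := max r₀ 0 with hr
  have hr0 : (0:ℝ) ≤ r := le_max_right _ _
  have hrK : K ⊆ Metric.closedBall 0 r :=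
    hr₀K.trans (Metric.closedBall_subset_closedBall (le_max_left _ _))
  -- bump function
  set c : ContDiffBump (0 : EuclideanSpace ℝ (Fin d)) :=
    ⟨r + 1, r + 2, by linarith, by linarith⟩ with hc
  set χ : EuclideanSpace ℝ (Fin d) → ℝ := ⇑c with hχ
  have hχsm : ContDiff ℝ ∞ χ := c.contDiff
  have hχtemp : Function.HasTemperateGrowth χ :=
    hasTemperateGrowth_of_hasCompactSupport hχsm c.hasCompactSupport
  -- uniform bound on derivatives of the bump
  have hBex : ∀ i : ℕ, ∃ Ci : ℝ, 0 ≤ Ci ∧ ∀ y, ‖iteratedFDeriv ℝ i χ y‖ ≤ Ci := by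
    intro i
    obtain ⟨Ci, h⟩ := (c.hasCompactSupport.iteratedFDeriv i).exists_bound_of_continuous
      (hχsm.continuous_iteratedFDeriv (mod_cast le_top))
    exact ⟨max Ci 0, le_max_right _ _, fun y => (h y).trans (le_max_left _ _)⟩
  choose Bi hBi0 hBi using hBex
  set B : ℝ := ∑ i ∈ Finset.range (n₂ + 1), Bi i with hBdef
  have hB0 : 0 ≤ B := Finset.sum_nonneg (fun j _ => hBi0 j)
  have hB : ∀ i, i ≤ n₂ → ∀ y, ‖iteratedFDeriv ℝ i χ y‖ ≤ B := fun i hi y =>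
    (hBi i y).trans (Finset.single_le_sum (fun j _ => hBi0 j)
      (Finset.mem_range.2 (Nat.lt_succ_of_le hi)))
  -- conjugate window
  set φc : SchwartzMap (EuclideanSpace ℝ (Fin d)) ℂ := conjSchwartz φ with hφc
  refine ⟨(n₂ : ℝ), ?_⟩
  intro N hN
  set M : ℕ := ⌈N⌉₊ with hM
  set Sφ : ℝ := ((Finset.Iic ((M, n₂) : ℕ × ℕ)).sup
    (schwartzSeminormFamily ℂ (EuclideanSpace ℝ (Fin d)) ℂ)) φc with hSφ
  have hSφ0 : 0 ≤ Sφ := apply_nonneg _ _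
  set A : ℝ := (C₀ : ℝ) * ((r+2)^k₁ * (2^n₂ * (B * (2^n₂ * (2^M * Sφ * (r+3)^M))))) with hA
  have hA0 : 0 ≤ A := by positivity
  refine ⟨max 1 A, lt_of_lt_of_le zero_lt_one (le_max_left 1 A), ?_⟩
  intro x ξ
  -- the constant in front
  set c₀ : ℝ := (2 * π) ^ (-(d : ℝ) / 2) with hc₀
  have hc₀0 : 0 ≤ c₀ := Real.rpow_nonneg (by positivity) _
  have hc₀1 : c₀ ≤ 1 := by
    apply Real.rpow_le_one_of_one_le_of_nonpos
    · nlinarith [pi_gt_three]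
    · have : (0:ℝ) ≤ (d:ℝ) := Nat.cast_nonneg d
      linarith
  -- the Schwartz functions
  set τ : SchwartzMap (EuclideanSpace ℝ (Fin d)) ℂ :=
    SchwartzMap.compCLM (𝕜 := ℝ) (sub_const_hasTemperateGrowth x)
      ⟨1, 1 + ‖x‖, fun y => by
        have h1 : ‖y‖ ≤ ‖y - x‖ + ‖x‖ := by
          simpa using norm_add_le (y - x) x
        have h2 : (0:ℝ) ≤ ‖x‖ := norm_nonneg x
        have h3 : (0:ℝ) ≤ ‖y - x‖ := norm_nonneg _
        rw [pow_one]
        nlinarith⟩ φc with hτ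
  have hτapp : ∀ y, τ y = φc (y - x) := fun y => rfl
  set P : SchwartzMap (EuclideanSpace ℝ (Fin d)) ℂ :=
    SchwartzMap.bilinLeftCLM (ContinuousLinearMap.mul ℝ ℂ) (char_hasTemperateGrowth ξ) τ with hP
  have hPapp : ∀ y, P y = τ y * char ξ y := fun y => rfl
  set ψ : SchwartzMap (EuclideanSpace ℝ (Fin d)) ℂ := c₀ • P with hψdef
  have hψapp : ∀ y, ψ y = ((2 * π) ^ (-(d : ℝ) / 2) : ℝ) *
      Complex.exp (-Complex.I * (⟪y, ξ⟫ : ℝ)) * (starRingEnd ℂ) (φ (y - x)) := by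
    intro y
    have : ψ y = c₀ • (φc (y - x) * char ξ y) := by
      rw [hψdef]
      simp only [SchwartzMap.smul_apply, hPapp, hτapp]
    rw [this, conjSchwartz_apply]
    rw [char]
    push_cast [Complex.real_smul]
    ring
  set Ψ : SchwartzMap (EuclideanSpace ℝ (Fin d)) ℂ :=
    SchwartzMap.bilinLeftCLM
      ((ContinuousLinearMap.lsmul ℝ ℝ : ℝ →L[ℝ] ℂ →L[ℝ] ℂ).flip) hχtemp ψ with hΨ
  have hΨapp : ⇑Ψ = fun y => χ y • ψ y := rfl
  -- V x ξ = f Ψ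
  have hVψ : V x ξ = f ψ := hV x ξ ψ hψapp
  have hfψΨ : f ψ = f Ψ := by
    have hdisj : Disjoint (tsupport ⇑(ψ - Ψ)) K := by
      have hsub : tsupport ⇑(ψ - Ψ) ⊆ (Metric.ball (0 : EuclideanSpace ℝ (Fin d)) (r+1))ᶜ := by
        apply closure_minimal ?_ (Metric.isOpen_ball.isClosed_compl)
        intro y hy
        simp only [Set.mem_compl_iff, Metric.mem_ball, not_lt]
        by_contra hlt
        push_neg at hlt
        have hy1 : χ y = 1 := by
          apply c.one_of_mem_closedBall
          simp only [Metric.mem_closedBall]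
          exact le_of_lt hlt
        apply hy
        have : (ψ - Ψ) y = ψ y - χ y • ψ y := by
          simp [SchwartzMap.sub_apply, hΨapp]
        rw [this, hy1, one_smul, sub_self]
      refine Set.disjoint_left.2 fun y hy hyK => ?_
      have h1 : y ∈ (Metric.ball (0 : EuclideanSpace ℝ (Fin d)) (r+1))ᶜ := hsub hy
      have h2 : y ∈ Metric.ball (0 : EuclideanSpace ℝ (Fin d)) (r+1) :=
        Metric.closedBall_subset_ball (by linarith) (hrK hyK)
      exact h1 h2
    have h0 : f (ψ - Ψ) = 0 := hsupp _ hdisj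
    have : f ψ - f Ψ = 0 := by rw [← h0, map_sub]
    exact sub_eq_zero.mp this

  -- quantities
  set X : ℝ := jb ξ ^ n₂ with hX
  have hjb1 : (1:ℝ) ≤ jb ξ := one_le_jb ξ
  have hjb0 : (0:ℝ) ≤ jb ξ := jb_nonneg ξ
  have hX0 : (0:ℝ) ≤ X := by positivity
  set u : ℝ := (1 + ‖x‖) ^ M with hu
  have hu0 : (0:ℝ) < u := by positivity
  set G : ℝ := 2 ^ M * Sφ * (r + 3) ^ M / u with hG
  have hG0 : (0:ℝ) ≤ G := by positivity
  -- char derivative bound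
  have hchar : ∀ b : ℕ, b ≤ n₂ → ∀ y, ‖iteratedFDeriv ℝ b (char ξ) y‖ ≤ X := by
    intro b hb y
    refine (char_norm_iteratedFDeriv_le ξ b y).trans ?_
    calc ‖ξ‖ ^ b ≤ jb ξ ^ b := pow_le_pow_left₀ (norm_nonneg ξ) (norm_le_jb ξ) b
      _ ≤ X := pow_le_pow_right₀ hjb1 hb
  -- translated window bound
  have hτiter : ∀ (a : ℕ) (y : EuclideanSpace ℝ (Fin d)),
      iteratedFDeriv ℝ a (⇑τ) y = iteratedFDeriv ℝ a (⇑φc) (y - x) := by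
    intro a y
    have h1 : ⇑τ = fun y => φc (y - x) := funext hτapp
    rw [h1, iteratedFDeriv_comp_sub_aux (⇑φc) φc.smooth' x a]
  have hτb : ∀ a : ℕ, a ≤ n₂ → ∀ y : EuclideanSpace ℝ (Fin d), ‖y‖ ≤ r + 2 →
      ‖iteratedFDeriv ℝ a (⇑τ) y‖ ≤ G := by
    intro a ha y hy
    rw [hτiter a y]
    have h1 : (1 + ‖y - x‖) ^ M * ‖iteratedFDeriv ℝ a (⇑φc) (y - x)‖ ≤ 2 ^ M * Sφ := by
      exact SchwartzMap.one_add_le_sup_seminorm_apply (𝕜 := ℂ)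
        (m := ((M, n₂) : ℕ × ℕ)) le_rfl ha φc (y - x)
    have ht0 : (0:ℝ) < (1 + ‖y - x‖) ^ M := by positivity
    have h2 : u ≤ (r + 3) ^ M * (1 + ‖y - x‖) ^ M := by
      rw [hu, ← mul_pow]
      apply pow_le_pow_left₀ (by positivity)
      have h3 : ‖x‖ ≤ ‖y‖ + ‖y - x‖ := by
        calc ‖x‖ = ‖y - (y - x)‖ := by rw [sub_sub_cancel]
          _ ≤ ‖y‖ + ‖y - x‖ := norm_sub_le y (y - x)
      nlinarith [norm_nonneg (y - x)]
    rw [hG, le_div_iff₀ hu0]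
    calc ‖iteratedFDeriv ℝ a (⇑φc) (y - x)‖ * u
        ≤ ‖iteratedFDeriv ℝ a (⇑φc) (y - x)‖ * ((r + 3) ^ M * (1 + ‖y - x‖) ^ M) :=
          mul_le_mul_of_nonneg_left h2 (norm_nonneg _)
      _ = (r + 3) ^ M * ((1 + ‖y - x‖) ^ M * ‖iteratedFDeriv ℝ a (⇑φc) (y - x)‖) := by ring
      _ ≤ (r + 3) ^ M * (2 ^ M * Sφ) := mul_le_mul_of_nonneg_left h1 (by positivity)
      _ = 2 ^ M * Sφ * (r + 3) ^ M := by ring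
  -- product bound
  have hPd : ∀ j : ℕ, j ≤ n₂ → ∀ y, ‖y‖ ≤ r + 2 →
      ‖iteratedFDeriv ℝ j (⇑P) y‖ ≤ 2 ^ n₂ * (X * G) := by
    intro j hj y hy
    have hcoe : ⇑P = fun y => τ y * char ξ y := rfl
    rw [hcoe]
    refine (norm_iteratedFDeriv_mul_le (𝕜 := ℝ) τ.smooth' (char_contDiff ξ) y
      (mod_cast le_top)).trans ?_
    have hstep : ∀ i ∈ Finset.range (j + 1),
        (j.choose i : ℝ) * ‖iteratedFDeriv ℝ i (⇑τ) y‖ *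
          ‖iteratedFDeriv ℝ (j - i) (char ξ) y‖ ≤ (j.choose i : ℝ) * (G * X) := by
      intro i hi
      have hi' : i ≤ n₂ := le_trans (Nat.lt_succ_iff.mp (Finset.mem_range.mp hi)) hj
      have hji : j - i ≤ n₂ := le_trans (Nat.sub_le j i) hj
      have hmm : ‖iteratedFDeriv ℝ i (⇑τ) y‖ * ‖iteratedFDeriv ℝ (j - i) (char ξ) y‖ ≤ G * X :=
        mul_le_mul (hτb i hi' y hy) (hchar (j - i) hji y) (norm_nonneg _) hG0
      calc (j.choose i : ℝ) * ‖iteratedFDeriv ℝ i (⇑τ) y‖ * ‖iteratedFDeriv ℝ (j - i) (char ξ) y‖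
          = (j.choose i : ℝ) * (‖iteratedFDeriv ℝ i (⇑τ) y‖ *
            ‖iteratedFDeriv ℝ (j - i) (char ξ) y‖) := by ring
        _ ≤ (j.choose i : ℝ) * (G * X) :=
            mul_le_mul_of_nonneg_left hmm (by positivity)
    calc ∑ i ∈ Finset.range (j + 1), (j.choose i : ℝ) * ‖iteratedFDeriv ℝ i (⇑τ) y‖ *
          ‖iteratedFDeriv ℝ (j - i) (char ξ) y‖
        ≤ ∑ i ∈ Finset.range (j + 1), (j.choose i : ℝ) * (G * X) := Finset.sum_le_sum hstep
      _ = (2 : ℝ) ^ j * (G * X) := by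
          rw [← Finset.sum_mul]
          norm_cast
          rw [Nat.sum_range_choose]
      _ = (2 : ℝ) ^ j * (X * G) := by ring
      _ ≤ 2 ^ n₂ * (X * G) := by
          apply mul_le_mul_of_nonneg_right (pow_le_pow_right₀ one_le_two hj) (by positivity)
  -- scaled bound
  have hψd : ∀ j : ℕ, j ≤ n₂ → ∀ y, ‖y‖ ≤ r + 2 →
      ‖iteratedFDeriv ℝ j (⇑ψ) y‖ ≤ 2 ^ n₂ * (X * G) := by
    intro j hj y hy
    have hcoe : ⇑ψ = fun z => c₀ • (P z) := rfl
    rw [hcoe, iteratedFDeriv_const_smul_apply' ((P.smooth ⊤).contDiffAt.of_le (by exact_mod_cast le_top)), norm_smul]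
    calc ‖c₀‖ * ‖iteratedFDeriv ℝ j (⇑P) y‖ ≤ 1 * (2 ^ n₂ * (X * G)) := by
          apply mul_le_mul ?_ (hPd j hj y hy) (norm_nonneg _) zero_le_one
          rw [Real.norm_eq_abs, abs_of_nonneg hc₀0]
          exact hc₀1
      _ = 2 ^ n₂ * (X * G) := one_mul _
  -- full bound
  have hΨd : ∀ n : ℕ, n ≤ n₂ → ∀ y, ‖y‖ ≤ r + 2 →
      ‖iteratedFDeriv ℝ n (⇑Ψ) y‖ ≤ 2 ^ n₂ * (B * (2 ^ n₂ * (X * G))) := by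
    intro n hn y hy
    rw [hΨapp]
    refine (norm_iteratedFDeriv_smul_le (𝕜 := ℝ) hχsm ψ.smooth' y (mod_cast le_top)).trans ?_
    have hstep : ∀ i ∈ Finset.range (n + 1),
        (n.choose i : ℝ) * ‖iteratedFDeriv ℝ i χ y‖ * ‖iteratedFDeriv ℝ (n - i) (⇑ψ) y‖ ≤
          (n.choose i : ℝ) * (B * (2 ^ n₂ * (X * G))) := by
      intro i hi
      have hi' : i ≤ n₂ := le_trans (Nat.lt_succ_iff.mp (Finset.mem_range.mp hi)) hn
      have hni : n - i ≤ n₂ := le_trans (Nat.sub_le n i) hn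
      have hmm : ‖iteratedFDeriv ℝ i χ y‖ * ‖iteratedFDeriv ℝ (n - i) (⇑ψ) y‖ ≤
          B * (2 ^ n₂ * (X * G)) :=
        mul_le_mul (hB i hi' y) (hψd (n - i) hni y hy) (norm_nonneg _) hB0
      calc (n.choose i : ℝ) * ‖iteratedFDeriv ℝ i χ y‖ * ‖iteratedFDeriv ℝ (n - i) (⇑ψ) y‖
          = (n.choose i : ℝ) * (‖iteratedFDeriv ℝ i χ y‖ * ‖iteratedFDeriv ℝ (n - i) (⇑ψ) y‖) := by
            ring
        _ ≤ (n.choose i : ℝ) * (B * (2 ^ n₂ * (X * G))) :=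
            mul_le_mul_of_nonneg_left hmm (by positivity)
    calc ∑ i ∈ Finset.range (n + 1), (n.choose i : ℝ) * ‖iteratedFDeriv ℝ i χ y‖ *
          ‖iteratedFDeriv ℝ (n - i) (⇑ψ) y‖
        ≤ ∑ i ∈ Finset.range (n + 1), (n.choose i : ℝ) * (B * (2 ^ n₂ * (X * G))) :=
          Finset.sum_le_sum hstep
      _ = (2 : ℝ) ^ n * (B * (2 ^ n₂ * (X * G))) := by
          rw [← Finset.sum_mul]
          norm_cast
          rw [Nat.sum_range_choose]
      _ ≤ 2 ^ n₂ * (B * (2 ^ n₂ * (X * G))) := by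
          apply mul_le_mul_of_nonneg_right (pow_le_pow_right₀ one_le_two hn) (by positivity)
  -- seminorm bound
  set D : ℝ := (r + 2) ^ k₁ * (2 ^ n₂ * (B * (2 ^ n₂ * (X * G)))) with hD
  have hD0 : 0 ≤ D := by positivity
  have hsem : ((Finset.Iic m).sup (schwartzSeminormFamily ℂ (EuclideanSpace ℝ (Fin d)) ℂ)) Ψ
      ≤ D := by
    apply Seminorm.finset_sup_apply_le hD0
    intro kn hkn
    have hk : kn.1 ≤ k₁ := (Finset.mem_Iic.mp hkn).1
    have hn : kn.2 ≤ n₂ := (Finset.mem_Iic.mp hkn).2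
    apply SchwartzMap.seminorm_le_bound ℂ kn.1 kn.2 Ψ hD0
    intro y
    by_cases hy : ‖y‖ ≤ r + 2
    · calc ‖y‖ ^ kn.1 * ‖iteratedFDeriv ℝ kn.2 (⇑Ψ) y‖
          ≤ (r + 2) ^ k₁ * (2 ^ n₂ * (B * (2 ^ n₂ * (X * G)))) := by
            apply mul_le_mul ?_ (hΨd kn.2 hn y hy) (norm_nonneg _) (by positivity)
            calc ‖y‖ ^ kn.1 ≤ (r + 2) ^ kn.1 := pow_le_pow_left₀ (norm_nonneg y) hy _
              _ ≤ (r + 2) ^ k₁ := pow_le_pow_right₀ (by linarith) hk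
        _ = D := rfl
    · have hz : iteratedFDeriv ℝ kn.2 (⇑Ψ) y = 0 := by
        apply iteratedFDeriv_eq_zero_of_eventually_zero
        have hU : {z : EuclideanSpace ℝ (Fin d) | r + 2 < ‖z‖} ∈ nhds y := by
          apply IsOpen.mem_nhds
          · exact isOpen_lt continuous_const continuous_norm
          · exact lt_of_not_ge hy
        refine Filter.eventuallyEq_of_mem hU ?_
        intro z hzmem
        have hχ0 : χ z = 0 := by
          apply Function.notMem_support.mp
          rw [hχ, c.support_eq]
          simp only [Metric.mem_ball, dist_zero_right]
          exact not_lt.2 (le_of_lt hzmem)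
        show χ z • ψ z = 0
        rw [hχ0, zero_smul]
      rw [hz, norm_zero, mul_zero]
      exact hD0
  -- conclusion
  have hfin1 : ‖V x ξ‖ ≤ (C₀ : ℝ) * D := by
    rw [hVψ, hfψΨ]
    exact (hfb Ψ).trans (mul_le_mul_of_nonneg_left hsem C₀.coe_nonneg)
  have hXr : jb ξ ^ ((n₂ : ℕ) : ℝ) = X := by rw [Real.rpow_natCast]
  have hjbx : (1 : ℝ) / u ≤ jb x ^ (-N) := by
    rw [Real.rpow_neg (jb_nonneg x), one_div]
    apply inv_anti₀ (Real.rpow_pos_of_pos (lt_of_lt_of_le one_pos (one_le_jb x)) N)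
    have h2 : jb x ^ N ≤ (1 + ‖x‖) ^ N := Real.rpow_le_rpow (jb_nonneg x) (jb_le_one_add x) hN
    have h3 : (1 + ‖x‖) ^ N ≤ (1 + ‖x‖) ^ (M : ℝ) :=
      Real.rpow_le_rpow_of_exponent_le (by nlinarith [norm_nonneg x]) (Nat.le_ceil N)
    have h4 : (1 + ‖x‖) ^ (M : ℝ) = u := by rw [Real.rpow_natCast]
    linarith
  have hfin2 : (C₀ : ℝ) * D = A * X * (1 / u) := by
    rw [hA, hD, hG]
    field_simp
  calc ‖V x ξ‖ ≤ (C₀ : ℝ) * D := hfin1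
    _ = A * X * (1 / u) := hfin2
    _ = (A * (1 / u)) * X := by ring
    _ ≤ (max 1 A * jb x ^ (-N)) * X := by
        apply mul_le_mul_of_nonneg_right ?_ hX0
        exact mul_le_mul (le_max_right 1 A) hjbx (by positivity)
          (le_trans zero_le_one (le_max_left 1 A))
    _ = max 1 A * jb x ^ (-N) * jb ξ ^ ((n₂ : ℕ) : ℝ) := by rw [hXr]
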